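/- Let κ ∈ [1,∞). Let D ⊆ ℝ be open and φ : D → [0,∞) be differentiable with |φ'(x)| ≤ κ φ(x) for all x ∈ D. Let R ⊆ ℝ satisfy |x − x'| ≥ κ^{−1} for all distinct x, x' ∈ R. Then for every interval I ⊆ D of length |I| ≥ κ^{−1}, ∑_{x ∈ R ∩ I} φ(x) ≤ C_κ ∫_I φ(x) dx, where C_κ depends only on κ (one may take C_κ = 2eκ) and both sides are interpreted in [0,∞]. -/

import Mathlib

open MeasureTheory Set
open scoped ENNReal

lemma st15_mono_aux {κ : ℝ} (hκ0 : 0 < κ) {D : Set ℝ} (hD : IsOpen D) {φ φ' : ℝ → ℝ}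
    (hφ : ∀ x ∈ D, 0 ≤ φ x ∧ HasDerivAt φ (φ' x) x ∧ |φ' x| ≤ κ * φ x)
    {I : Set ℝ} (hI : Convex ℝ I) (hID : I ⊆ D) {x y : ℝ} (hx : x ∈ I) (hy : y ∈ I)
    (hxy : x ≤ y) :
    φ x * Real.exp (κ * x - κ * y) ≤ φ y ∧ φ y * Real.exp (κ * x - κ * y) ≤ φ x := by
  have hIcc : Icc x y ⊆ D := fun z hz => hID (hI.ordConnected.out hx hy hz)
  have hexp : ∀ z : ℝ, HasDerivAt (fun t : ℝ => Real.exp (κ * t)) (Real.exp (κ * z) * κ) z := by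
    intro z
    simpa using ((hasDerivAt_id z).const_mul κ).exp
  have hderiv : ∀ z ∈ D, HasDerivAt (fun t => φ t * Real.exp (κ * t))
      ((φ' z + κ * φ z) * Real.exp (κ * z)) z := by
    intro z hz
    have := (hφ z hz).2.1.mul (hexp z)
    exact this.congr_deriv (by ring)
  have hexp' : ∀ z : ℝ, HasDerivAt (fun t : ℝ => Real.exp (-(κ * t)))
      (Real.exp (-(κ * z)) * (-κ)) z := by
    intro z
    simpa using (((hasDerivAt_id z).const_mul κ).neg).exp
  have hderiv' : ∀ z ∈ D, HasDerivAt (fun t => φ t * Real.exp (-(κ * t)))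
      ((φ' z - κ * φ z) * Real.exp (-(κ * z))) z := by
    intro z hz
    have := (hφ z hz).2.1.mul (hexp' z)
    exact this.congr_deriv (by ring)
  have hcont1 : ContinuousOn (fun t => φ t * Real.exp (κ * t)) (Icc x y) := fun z hz =>
    ((hderiv z (hIcc hz)).continuousAt).continuousWithinAt
  have hcont2 : ContinuousOn (fun t => φ t * Real.exp (-(κ * t))) (Icc x y) := fun z hz =>
    ((hderiv' z (hIcc hz)).continuousAt).continuousWithinAt
  have hmono : MonotoneOn (fun t => φ t * Real.exp (κ * t)) (Icc x y) := by
    apply monotoneOn_of_deriv_nonneg (convex_Icc x y) hcont1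
    · intro z hz
      exact ((hderiv z (hIcc (interior_subset hz))).differentiableAt).differentiableWithinAt
    · intro z hz
      rw [(hderiv z (hIcc (interior_subset hz))).deriv]
      have h2 := (hφ z (hIcc (interior_subset hz))).2.2
      have h3 := neg_abs_le (φ' z)
      have : (0:ℝ) ≤ φ' z + κ * φ z := by linarith
      exact mul_nonneg this (Real.exp_pos _).le
  have hanti : AntitoneOn (fun t => φ t * Real.exp (-(κ * t))) (Icc x y) := by
    apply antitoneOn_of_deriv_nonpos (convex_Icc x y) hcont2
    · intro z hz
      exact ((hderiv' z (hIcc (interior_subset hz))).differentiableAt).differentiableWithinAt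
    · intro z hz
      rw [(hderiv' z (hIcc (interior_subset hz))).deriv]
      have h2 := (hφ z (hIcc (interior_subset hz))).2.2
      have h3 := le_abs_self (φ' z)
      have : φ' z - κ * φ z ≤ 0 := by linarith
      exact mul_nonpos_of_nonpos_of_nonneg this (Real.exp_pos _).le
  constructor
  · have h := mul_le_mul_of_nonneg_right (hmono ⟨le_rfl, hxy⟩ ⟨hxy, le_rfl⟩ hxy)
      (Real.exp_pos (-(κ * y))).le
    calc φ x * Real.exp (κ * x - κ * y)
        = φ x * Real.exp (κ * x) * Real.exp (-(κ * y)) := by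
          rw [mul_assoc, ← Real.exp_add]; ring_nf
      _ ≤ φ y * Real.exp (κ * y) * Real.exp (-(κ * y)) := h
      _ = φ y := by rw [mul_assoc, ← Real.exp_add, add_neg_cancel, Real.exp_zero, mul_one]
  · have h := mul_le_mul_of_nonneg_right (hanti ⟨le_rfl, hxy⟩ ⟨hxy, le_rfl⟩ hxy)
      (Real.exp_pos (κ * x)).le
    calc φ y * Real.exp (κ * x - κ * y)
        = φ y * Real.exp (-(κ * y)) * Real.exp (κ * x) := by
          rw [mul_assoc, ← Real.exp_add]; congr 1; ring
      _ ≤ φ x * Real.exp (-(κ * x)) * Real.exp (κ * x) := h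
      _ = φ x := by rw [mul_assoc, ← Real.exp_add, neg_add_cancel, Real.exp_zero, mul_one]

lemma st15_harnack {κ : ℝ} (hκ0 : 0 < κ) {D : Set ℝ} (hD : IsOpen D) {φ φ' : ℝ → ℝ}
    (hφ : ∀ x ∈ D, 0 ≤ φ x ∧ HasDerivAt φ (φ' x) x ∧ |φ' x| ≤ κ * φ x)
    {I : Set ℝ} (hI : Convex ℝ I) (hID : I ⊆ D) {x y : ℝ} (hx : x ∈ I) (hy : y ∈ I) :
    φ x * Real.exp (-(κ * |y - x|)) ≤ φ y := by
  rcases le_total x y with h | h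
  · have := (st15_mono_aux hκ0 hD hφ hI hID hx hy h).1
    rwa [show -(κ * |y - x|) = κ * x - κ * y by
      rw [abs_of_nonneg (by linarith : (0:ℝ) ≤ y - x)]; ring]
  · have := (st15_mono_aux hκ0 hD hφ hI hID hy hx h).2
    rwa [show -(κ * |y - x|) = κ * y - κ * x by
      rw [abs_of_nonpos (by linarith : y - x ≤ (0:ℝ))]; ring]

lemma st15_side {I : Set ℝ} (hI : Convex ℝ I) {x r : ℝ} (hx : x ∈ I) (hr : 0 < r)
    (hvol : ENNReal.ofReal (4 * r) ≤ volume I) :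
    Icc x (x + r) ⊆ I ∨ Icc (x - r) x ⊆ I := by
  by_contra h
  push_neg at h
  obtain ⟨p, hp, hpI⟩ := not_subset.mp h.1
  obtain ⟨q, hq, hqI⟩ := not_subset.mp h.2
  have hsub : I ⊆ Icc q p := by
    intro z hz
    constructor
    · by_contra hc
      push_neg at hc
      exact hqI (hI.ordConnected.out hz hx ⟨hc.le, hq.2⟩)
    · by_contra hc
      push_neg at hc
      exact hpI (hI.ordConnected.out hx hz ⟨hp.1, hc.le⟩)
  have h1 : volume I ≤ ENNReal.ofReal (p - q) := by
    calc volume I ≤ volume (Icc q p) := measure_mono hsub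
      _ = ENNReal.ofReal (p - q) := by rw [Real.volume_Icc]
  have h2 : (4:ℝ) * r ≤ p - q := by
    have := hvol.trans h1
    exact (ENNReal.ofReal_le_ofReal_iff (by linarith [hp.1, hq.2] : (0:ℝ) ≤ p - q)).mp this
  have := hp.2
  have := hq.1
  linarith

/-- a sum of `φ` over a `κ⁻¹`-separated set within an interval `I ⊆ D` of
length at least `κ⁻¹` is controlled by the integral of `φ` over `I`, whenever `φ ≥ 0` is
differentiable on the open set `D` with `|φ'| ≤ κ φ`. -/
theorem statement15 (κ : ℝ) (hκ : 1 ≤ κ) :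
    ∃ C : ℝ, 0 < C ∧
      ∀ (D : Set ℝ), IsOpen D →
        ∀ (φ φ' : ℝ → ℝ),
          (∀ x ∈ D, 0 ≤ φ x ∧ HasDerivAt φ (φ' x) x ∧ |φ' x| ≤ κ * φ x) →
          ∀ (R : Set ℝ), (∀ x ∈ R, ∀ y ∈ R, x ≠ y → κ⁻¹ ≤ |x - y|) →
            ∀ (I : Set ℝ), Convex ℝ I → I ⊆ D → ENNReal.ofReal κ⁻¹ ≤ volume I →
              ∑' x : ↥(R ∩ I), ENNReal.ofReal (φ x) ≤
                ENNReal.ofReal C * ∫⁻ x in I, ENNReal.ofReal (φ x) := by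
  have hκ0 : (0:ℝ) < κ := lt_of_lt_of_le one_pos hκ
  refine ⟨4 * κ * Real.exp 1, by positivity, ?_⟩
  intro D hD φ φ' hφ R hR I hI hID hvol
  set C : ℝ := 4 * κ * Real.exp 1 with hC
  set r : ℝ := κ⁻¹ / 4 with hrdef
  have hr0 : (0:ℝ) < r := by positivity
  have hκr : κ⁻¹ = 4 * r := by rw [hrdef]; ring
  have hvol' : ENNReal.ofReal (4 * r) ≤ volume I := by rwa [← hκr]
  have hImeas : MeasurableSet I := hI.ordConnected.measurableSet
  set f : ℝ → ℝ≥0∞ := fun y => ENNReal.ofReal (φ y) with hf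
  have hfae : AEMeasurable f (volume.restrict I) := by
    have hcont : ContinuousOn φ I := fun y hy =>
      ((hφ y (hID hy)).2.1.continuousAt).continuousWithinAt
    exact (ENNReal.continuous_ofReal.comp_continuousOn hcont).aemeasurable hImeas
  set g : ℝ → ℝ≥0∞ := hfae.mk f with hg
  have hgmeas : Measurable g := hfae.measurable_mk
  have hfg : f =ᵐ[volume.restrict I] g := hfae.ae_eq_mk
  set ν : Measure ℝ := (volume.restrict I).withDensity g with hν
  set J : ℝ → Set ℝ := fun x => I ∩ Icc (x - r) (x + r) with hJ
  have hJmeas : ∀ x, MeasurableSet (J x) := fun x => hImeas.inter measurableSet_Icc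
  -- total mass
  have htot : ν Set.univ = ∫⁻ x in I, ENNReal.ofReal (φ x) := by
    rw [hν, withDensity_apply _ MeasurableSet.univ, Measure.restrict_univ]
    exact (lintegral_congr_ae hfg).symm
  -- per-point bound
  have hpoint : ∀ x ∈ R ∩ I, ENNReal.ofReal (φ x) ≤ ENNReal.ofReal C * ν (J x) := by
    rintro x ⟨hxR, hxI⟩
    have hνJ : ν (J x) = ∫⁻ y in J x, f y ∂volume := by
      rw [hν, withDensity_apply _ (hJmeas x)]
      have : (volume.restrict I).restrict (J x) = volume.restrict (J x) := by
        rw [Measure.restrict_restrict (hJmeas x), inter_eq_left.mpr inter_subset_left]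
      rw [this]
      refine lintegral_congr_ae ?_
      exact (hfg.symm).filter_mono (ae_mono (Measure.restrict_mono inter_subset_left le_rfl))
    -- measure of J x is at least r
    have hJvol : ENNReal.ofReal r ≤ volume (J x) := by
      rcases st15_side hI hxI hr0 hvol' with hside | hside
      · have hsub : Icc x (x + r) ⊆ J x := fun z hz =>
          ⟨hside hz, ⟨by linarith [hz.1], hz.2⟩⟩
        calc ENNReal.ofReal r = volume (Icc x (x + r)) := by
              rw [Real.volume_Icc]; norm_num
          _ ≤ volume (J x) := measure_mono hsub
      · have hsub : Icc (x - r) x ⊆ J x := fun z hz =>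
          ⟨hside hz, ⟨hz.1, by linarith [hz.2]⟩⟩
        calc ENNReal.ofReal r = volume (Icc (x - r) x) := by
              rw [Real.volume_Icc]; norm_num
          _ ≤ volume (J x) := measure_mono hsub
    -- pointwise lower bound on J x
    have hlow : ∀ y ∈ J x, ENNReal.ofReal (φ x * Real.exp (-1)) ≤ f y := by
      rintro y ⟨hyI, hy1, hy2⟩
      have habs : |y - x| ≤ r := abs_le.mpr ⟨by linarith, by linarith⟩
      have h1 : φ x * Real.exp (-1) ≤ φ x * Real.exp (-(κ * |y - x|)) := by
        have hexp : Real.exp (-1) ≤ Real.exp (-(κ * |y - x|)) := by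
          apply Real.exp_le_exp.mpr
          have : κ * |y - x| ≤ κ * r := by
            exact mul_le_mul_of_nonneg_left habs hκ0.le
          have hκr1 : κ * r ≤ 1 := by
            have hκne : κ ≠ 0 := ne_of_gt hκ0
            have h4 : κ * r = 1 / 4 := by rw [hrdef]; field_simp
            rw [h4]; norm_num
          linarith
        exact mul_le_mul_of_nonneg_left hexp (hφ x (hID hxI)).1
      have h2 := st15_harnack hκ0 hD hφ hI hID hxI hyI
      exact ENNReal.ofReal_le_ofReal (h1.trans h2)
    have hint : ENNReal.ofReal (φ x * Real.exp (-1)) * ENNReal.ofReal r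
        ≤ ∫⁻ y in J x, f y ∂volume := by
      calc ENNReal.ofReal (φ x * Real.exp (-1)) * ENNReal.ofReal r
          ≤ ENNReal.ofReal (φ x * Real.exp (-1)) * volume (J x) :=
            by gcongr
        _ = ∫⁻ _ in J x, ENNReal.ofReal (φ x * Real.exp (-1)) ∂volume := by
            rw [setLIntegral_const]
        _ ≤ ∫⁻ y in J x, f y ∂volume := by
            refine lintegral_mono_ae ?_
            filter_upwards [ae_restrict_mem (hJmeas x)] with y hy
            exact hlow y hy
    have hkey : ENNReal.ofReal (φ x) ≤
        ENNReal.ofReal C * (ENNReal.ofReal (φ x * Real.exp (-1)) * ENNReal.ofReal r) := by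
      have hφx : (0:ℝ) ≤ φ x := (hφ x (hID hxI)).1
      rw [← ENNReal.ofReal_mul (mul_nonneg hφx (Real.exp_pos _).le),
        ← ENNReal.ofReal_mul (by positivity : (0:ℝ) ≤ C)]
      have hEq : C * (φ x * Real.exp (-1) * r) = φ x := by
        rw [hC, hrdef, Real.exp_neg]
        have hκne : κ ≠ 0 := ne_of_gt hκ0
        have hene : Real.exp 1 ≠ 0 := Real.exp_ne_zero 1
        field_simp
      exact ENNReal.ofReal_le_ofReal (le_of_eq hEq.symm)
    calc ENNReal.ofReal (φ x)
        ≤ ENNReal.ofReal C * (ENNReal.ofReal (φ x * Real.exp (-1)) * ENNReal.ofReal r) := hkey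
      _ ≤ ENNReal.ofReal C * ∫⁻ y in J x, f y ∂volume :=
          by gcongr
      _ = ENNReal.ofReal C * ν (J x) := by rw [hνJ]
  -- disjointness
  have hdisj : ∀ x ∈ R ∩ I, ∀ y ∈ R ∩ I, x ≠ y → Disjoint (J x) (J y) := by
    rintro x ⟨hxR, hxI⟩ y ⟨hyR, hyI⟩ hxy
    rw [Set.disjoint_left]
    rintro z ⟨hzI, hz1, hz2⟩ ⟨hzI', hz1', hz2'⟩
    have h1 : |x - z| ≤ r := abs_le.mpr ⟨by linarith, by linarith⟩
    have h2 : |z - y| ≤ r := abs_le.mpr ⟨by linarith, by linarith⟩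
    have h3 := hR x hxR y hyR hxy
    have h4 := abs_sub_le x z y
    rw [hκr] at h3
    linarith
  -- assemble
  rw [ENNReal.tsum_eq_iSup_sum]
  refine iSup_le fun s => ?_
  calc ∑ p ∈ s, ENNReal.ofReal (φ p)
      ≤ ∑ p ∈ s, ENNReal.ofReal C * ν (J p) :=
        Finset.sum_le_sum fun p _ => hpoint p p.2
    _ = ENNReal.ofReal C * ∑ p ∈ s, ν (J p) := by rw [Finset.mul_sum]
    _ = ENNReal.ofReal C * ν (⋃ p ∈ s, J ↑p) := by
        have hd : Set.PairwiseDisjoint (↑s) (fun p : ↥(R ∩ I) => J ↑p) :=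
          fun p _ q _ hpq => hdisj p p.2 q q.2 (Subtype.coe_injective.ne hpq)
        rw [measure_biUnion_finset hd (fun p _ => hJmeas ↑p)]
    _ ≤ ENNReal.ofReal C * ν Set.univ :=
        by gcongr; exact subset_univ _
    _ = ENNReal.ofReal C * ∫⁻ x in I, ENNReal.ofReal (φ x) := by rw [htot]
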